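/- Let G be a finite group, ρ a finite-dimensional complex representation of G with character χ_ρ, and N = ker ρ = {g ∈ G : ρ(g) = id}. Let χ_i, χ_j be irreducible characters of G. If the restrictions of χ_i and χ_j to N are proportional, i.e., there exists c ∈ ℂ with χ_i(n) = c · χ_j(n) for all n ∈ N, then there exists a natural number L ≥ 0 such that ⟨χ_ρ^L · χ_i, χ_j⟩ ≥ 1, i.e., there is a walk from the vertex of χ_i to the vertex of χ_j in the McKay quiver. -/

import Mathlib

open scoped ComplexOrder

/-- A function `χ : G → ℂ` is an irreducible character of `G` if it is the character of
some simple (irreducible) finite-dimensional complex representation of `G`. -/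
def IsIrrChar (G : Type) [Group G] (χ : G → ℂ) : Prop :=
  ∃ V : FDRep ℂ G, CategoryTheory.Simple V ∧ V.character = χ

/-- The standard inner product of complex-valued class functions on a finite group. -/
noncomputable def innChar (G : Type) [Group G] [Fintype G] (φ ψ : G → ℂ) : ℂ :=
  (Fintype.card G : ℂ)⁻¹ * ∑ g : G, φ g * (starRingEnd ℂ) (ψ g)

section Aux

open Module Polynomial


/-- An endomorphism of finite order on a f.d. complex vector space has an eigenbasis
with root-of-unity eigenvalues. -/
theorem exists_eigenbasis {W : Type} [AddCommGroup W] [Module ℂ W] [FiniteDimensional ℂ W]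
    (f : Module.End ℂ W) (n : ℕ) (hn : n ≠ 0) (hf : f ^ n = 1) :
    ∃ (ι : Type) (_ : Fintype ι) (b : Basis ι ℂ W) (μ : ι → ℂ),
      (∀ i, f (b i) = μ i • b i) ∧ ∀ i, μ i ^ n = 1 := by
  have hsq : Squarefree (Polynomial.X ^ n - Polynomial.C (1:ℂ)) :=
    (Polynomial.separable_X_pow_sub_C 1 (by exact_mod_cast hn) one_ne_zero).squarefree
  have h0 : Polynomial.aeval f (Polynomial.X ^ n - Polynomial.C (1:ℂ)) = 0 := by
    simp [hf]
  have hss : f.IsSemisimple := Module.End.isSemisimple_of_squarefree_aeval_eq_zero hsq h0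
  have hsup : ⨆ μ : ℂ, f.eigenspace μ = ⊤ := by
    have := Module.End.iSup_maxGenEigenspace_eq_top f
    simpa [hss.isFinitelySemisimple.maxGenEigenspace_eq_eigenspace] using this
  have hind : iSupIndep f.eigenspace := by
    have := f.independent_genEigenspace 1
    simpa [← Module.End.eigenspace_def] using this
  have hint : DirectSum.IsInternal f.eigenspace :=
    DirectSum.isInternal_submodule_of_iSupIndep_of_iSup_eq_top hind hsup
  classical
  let bs : ∀ μ : ℂ, Basis (Basis.ofVectorSpaceIndex ℂ (f.eigenspace μ)) ℂ (f.eigenspace μ) :=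
    fun μ => Basis.ofVectorSpace ℂ _
  let b := hint.collectedBasis bs
  haveI : Fintype (Σ μ : ℂ, Basis.ofVectorSpaceIndex ℂ (f.eigenspace μ)) :=
    FiniteDimensional.fintypeBasisIndex b
  refine ⟨_, inferInstance, b, fun i => i.1, fun i => ?_, fun i => ?_⟩
  · have hmem : b i ∈ f.eigenspace i.1 := hint.collectedBasis_mem bs i
    exact Module.End.mem_eigenspace_iff.mp hmem
  · have hmem : b i ∈ f.eigenspace i.1 := hint.collectedBasis_mem bs i
    have hb : f (b i) = i.1 • b i := Module.End.mem_eigenspace_iff.mp hmem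
    have hpow : ∀ k : ℕ, (f ^ k) (b i) = i.1 ^ k • b i := by
      intro k
      induction k with
      | zero => simp
      | succ k ih =>
        rw [pow_succ, Module.End.mul_apply, hb, map_smul, ih, smul_smul, ← pow_succ']
    have := hpow n
    rw [hf] at this
    have hne : b i ≠ 0 := b.ne_zero i
    have : (i.1 ^ n - 1) • b i = 0 := by
      rw [sub_smul, one_smul, ← this]; simp
    rcases smul_eq_zero.mp this with h | h
    · exact sub_eq_zero.mp h
    · exact absurd h hne

section TraceDiag

variable {W : Type} [AddCommGroup W] [Module ℂ W] [FiniteDimensional ℂ W]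

theorem trace_eq_sum_eigenvalues {ι : Type} [Fintype ι] (b : Basis ι ℂ W) (f : Module.End ℂ W)
    (μ : ι → ℂ) (hb : ∀ i, f (b i) = μ i • b i) :
    LinearMap.trace ℂ W f = ∑ i, μ i := by
  classical
  have hm : (LinearMap.toMatrix b b) f = Matrix.diagonal μ := by
    ext i j
    rw [LinearMap.toMatrix_apply, hb, map_smul, Basis.repr_self]
    rw [Finsupp.smul_apply, Finsupp.single_apply, Matrix.diagonal_apply]
    by_cases h : j = i
    · subst h; simp
    · simp [h, Ne.symm h]
  rw [LinearMap.trace_eq_matrix_trace ℂ b f, hm, Matrix.trace_diagonal]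

end TraceDiag

section CharFacts

variable {G : Type} [Group G] [Fintype G]

theorem rho_eigenbasis (V : FDRep ℂ G) (g : G) :
    ∃ (ι : Type) (_ : Fintype ι) (b : Basis ι ℂ V) (μ : ι → ℂ),
      (∀ i, V.ρ g (b i) = μ i • b i) ∧ ∀ i, μ i ^ orderOf g = 1 := by
  refine exists_eigenbasis (V.ρ g) (orderOf g) (orderOf_pos g).ne' ?_
  rw [← map_pow, pow_orderOf_eq_one, map_one]

theorem char_conj_eq (V : FDRep ℂ G) (g : G) :
    (starRingEnd ℂ) (V.character g) = V.character g⁻¹ := by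
  obtain ⟨ι, _, b, μ, hb, hμ⟩ := rho_eigenbasis V g
  have hn : orderOf g ≠ 0 := (orderOf_pos g).ne'
  have hμ0 : ∀ i, μ i ≠ 0 := fun i h => by
    have := hμ i; rw [h, zero_pow hn] at this; exact zero_ne_one this
  have hb' : ∀ i, V.ρ g⁻¹ (b i) = (μ i)⁻¹ • b i := by
    intro i
    have h1 : V.ρ g⁻¹ (V.ρ g (b i)) = b i := by
      rw [← Module.End.mul_apply, ← map_mul, inv_mul_cancel, map_one, Module.End.one_apply]
    rw [hb, map_smul] at h1
    rw [eq_comm, inv_smul_eq_iff₀ (hμ0 i)]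
    exact h1.symm
  have h1 : V.character g = ∑ i, μ i := trace_eq_sum_eigenvalues b (V.ρ g) μ hb
  have h2 : V.character g⁻¹ = ∑ i, (μ i)⁻¹ := trace_eq_sum_eigenvalues b (V.ρ g⁻¹) _ hb'
  rw [h1, h2, map_sum]
  refine Finset.sum_congr rfl fun i _ => ?_
  rw [← Complex.inv_eq_conj (Complex.norm_eq_one_of_pow_eq_one (hμ i) hn)]

theorem char_eq_dim_iff (V : FDRep ℂ G) (g : G) :
    V.character g = (finrank ℂ V : ℂ) ↔ V.ρ g = 1 := by
  constructor
  · intro h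
    obtain ⟨ι, _, b, μ, hb, hμ⟩ := rho_eigenbasis V g
    have hn : orderOf g ≠ 0 := (orderOf_pos g).ne'
    have h1 : V.character g = ∑ i, μ i := trace_eq_sum_eigenvalues b (V.ρ g) μ hb
    have hcard : finrank ℂ V = Fintype.card ι := finrank_eq_card_basis b
    have hre : ∀ i ∈ Finset.univ, (μ i).re ≤ (fun _ => (1:ℝ)) i := fun i _ => by
      calc (μ i).re ≤ ‖μ i‖ := Complex.re_le_norm _
      _ = 1 := Complex.norm_eq_one_of_pow_eq_one (hμ i) hn
    have hsum : ∑ i, (μ i).re = ∑ i : ι, (fun _ => (1:ℝ)) i := by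
      have := congrArg Complex.re (h1.symm.trans h)
      simpa [Complex.re_sum, hcard] using this
    have hall : ∀ i ∈ Finset.univ, (μ i).re = 1 :=
      fun i hi => ((Finset.sum_eq_sum_iff_of_le hre).mp hsum i hi)
    have hμ1 : ∀ i, μ i = 1 := by
      intro i
      have habs : ‖μ i‖ = 1 := Complex.norm_eq_one_of_pow_eq_one (hμ i) hn
      have hre1 : (μ i).re = 1 := hall i (Finset.mem_univ i)
      have him : (μ i).im = 0 := by
        have := Complex.sq_norm (μ i)
        rw [habs] at this
        rw [Complex.normSq_apply, hre1] at this
        nlinarith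
      exact Complex.ext (by simp [hre1]) (by simp [him])
    apply Basis.ext b
    intro i
    rw [hb, hμ1, one_smul, Module.End.one_apply]
  · intro h
    have : V.character g = LinearMap.trace ℂ V (V.ρ g) := rfl
    rw [this, h]
    simp

end CharFacts


theorem fiber_sum_eq_zero {α : Type} [Fintype α] (v w : α → ℂ)
    (h : ∀ L : ℕ, ∑ g, (v g)^L * w g = 0) (z : ℂ) :
    ∑ g ∈ Finset.univ.filter (fun g => v g = z), w g = 0 := by
  classical
  set T : Finset ℂ := Finset.univ.image v with hT
  by_cases hz : z ∈ T
  · set Q : ℂ[X] := Lagrange.basis T id z with hQ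
    have hinj : Set.InjOn (id : ℂ → ℂ) T := Function.injective_id.injOn
    have key : ∑ g, Q.eval (v g) * w g = 0 := by
      set m := Q.natDegree + 1 with hm
      calc ∑ g, Q.eval (v g) * w g
          = ∑ g, ∑ k ∈ Finset.range m, Q.coeff k * ((v g)^k * w g) := by
            refine Finset.sum_congr rfl fun g _ => ?_
            rw [eval_eq_sum_range, Finset.sum_mul]
            exact Finset.sum_congr rfl fun k _ => by ring
        _ = ∑ k ∈ Finset.range m, Q.coeff k * ∑ g, (v g)^k * w g := by
            rw [Finset.sum_comm]
            exact Finset.sum_congr rfl fun k _ => by rw [Finset.mul_sum]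
        _ = 0 := by simp [h]
    rw [← key, Finset.sum_filter]
    refine Finset.sum_congr rfl fun g _ => ?_
    by_cases hg : v g = z
    · rw [if_pos hg, hg]
      have := Lagrange.eval_basis_self hinj hz
      simpa [hQ] using (by rw [this, one_mul] : Q.eval (id z) * w g = w g).symm
    · rw [if_neg hg]
      have hvg : v g ∈ T := Finset.mem_image_of_mem v (Finset.mem_univ g)
      have := Lagrange.eval_basis_of_ne (v := (id : ℂ → ℂ)) (s := T) (i := z) (j := v g) (fun hc : z = v g => hg hc.symm) hvg
      simp only [id_eq] at this
      rw [hQ, this, zero_mul]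
  · refine Finset.sum_eq_zero fun g hg => ?_
    exfalso
    rw [Finset.mem_filter] at hg
    exact hz (hg.2 ▸ Finset.mem_image_of_mem v (Finset.mem_univ g))

open Module CategoryTheory CategoryTheory.MonoidalCategory


section Inn

variable {G : Type} [Group G] [Fintype G]

theorem card_ne_zero' : (Fintype.card G : ℂ) ≠ 0 := by
  exact_mod_cast Fintype.card_ne_zero

theorem innChar_char_eq_finrank (W V : FDRep ℂ G) :
    innChar G W.character V.character =
      (finrank ℂ (Representation.invariants (W ⊗ FDRep.of (Representation.dual V.ρ)).ρ) : ℂ) := by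
  letI : Invertible (Fintype.card G : ℂ) := invertibleOfNonzero card_ne_zero'
  have h := FDRep.average_char_eq_finrank_invariants (W ⊗ FDRep.of (Representation.dual V.ρ))
  rw [← h, innChar, Nat.card_eq_fintype_card]
  congr 1
  refine Finset.sum_congr rfl fun g _ => ?_
  rw [char_conj_eq, FDRep.char_tensor]
  simp

theorem finrank_ne_zero_of_simple (V : FDRep ℂ G) (hs : Simple V) : finrank ℂ V ≠ 0 := by
  intro h
  haveI := hs
  haveI : Fintype G := inferInstanceAs (Fintype G)
  letI : Invertible (Nat.card G : ℂ) :=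
    invertibleOfNonzero (by
      have : (Nat.card G) = Fintype.card G := Nat.card_eq_fintype_card
      rw [this]; exact card_ne_zero')
  have horth := FDRep.char_orthonormal (k := ℂ) (G := G) V V
  haveI hsub : Subsingleton V := by
    rw [← Module.finrank_zero_iff (R := ℂ)]; exact h
  have hchar : ∀ g : G, V.character g = 0 := by
    intro g
    have : V.ρ g = 0 := Subsingleton.elim _ _
    simp [FDRep.character, this]
  rw [if_pos ⟨Iso.refl V⟩] at horth
  simp only [hchar, mul_zero, zero_mul, Finset.sum_const_zero, smul_zero] at horth
  exact zero_ne_one horth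

end Inn

section Main

variable {G : Type} [Group G] [Fintype G]

theorem exists_nat_innChar (ρ Vi Vj : FDRep ℂ G) (L : ℕ) :
    ∃ m : ℕ, innChar G (ρ.character ^ L * Vi.character) Vj.character = m := by
  have hW : ∃ W : FDRep ℂ G, W.character = ρ.character ^ L * Vi.character := by
    induction L with
    | zero => exact ⟨Vi, by simp⟩
    | succ L ih =>
      obtain ⟨W, hW⟩ := ih
      refine ⟨W ⊗ ρ, ?_⟩
      rw [FDRep.char_tensor, hW]
      funext g
      simp only [Pi.mul_apply, Pi.pow_apply, pow_succ]
      ring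
  obtain ⟨W, hW⟩ := hW
  rw [← hW]
  exact ⟨_, innChar_char_eq_finrank W Vj⟩

end Main

open CategoryTheory Module in
/-- If the restrictions of the irreducible characters `χᵢ` and `χⱼ` to `N = ker ρ` are
proportional, then there is a walk from the vertex of `χᵢ` to the vertex of `χⱼ` in the
McKay quiver of `ρ`: there exists `L ≥ 0` with `⟨χ_ρ^L · χᵢ, χⱼ⟩ ≥ 1`. -/
theorem mckay_walk_of_proportional_restriction (G : Type) [Group G] [Fintype G]
    (ρ : FDRep ℂ G) (χi χj : G → ℂ) (hχi : IsIrrChar G χi) (hχj : IsIrrChar G χj)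
    (hprop : ∃ c : ℂ, ∀ n : G, ρ.ρ n = 1 → χi n = c * χj n) :
    ∃ L : ℕ, 1 ≤ innChar G (ρ.character ^ L * χi) χj := by
  classical
  obtain ⟨Vi, hsi, hci⟩ := hχi
  obtain ⟨Vj, hsj, hcj⟩ := hχj
  subst hci
  subst hcj
  obtain ⟨c, hc⟩ := hprop
  by_contra hcon
  push_neg at hcon
  have hzero : ∀ L : ℕ, innChar G (ρ.character ^ L * Vi.character) Vj.character = 0 := by
    intro L
    obtain ⟨m, hm⟩ := exists_nat_innChar ρ Vi Vj L
    rcases Nat.eq_zero_or_pos m with h0 | h1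
    · rw [hm, h0, Nat.cast_zero]
    · exact absurd (by rw [hm]; exact Nat.one_le_cast.mpr h1) (hcon L)
  have hsum : ∀ L : ℕ,
      ∑ g : G, (ρ.character g) ^ L *
        (Vi.character g * (starRingEnd ℂ) (Vj.character g)) = 0 := by
    intro L
    have h := hzero L
    rw [innChar] at h
    rcases mul_eq_zero.mp h with h' | h'
    · exact absurd h' (inv_ne_zero card_ne_zero')
    · rw [← h']
      refine Finset.sum_congr rfl fun g _ => ?_
      simp only [Pi.mul_apply, Pi.pow_apply]
      ring
  have key := fiber_sum_eq_zero ρ.character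
    (fun g => Vi.character g * (starRingEnd ℂ) (Vj.character g)) hsum (ρ.character 1)
  have hfilt : (Finset.univ.filter (fun g : G => ρ.character g = ρ.character 1))
      = Finset.univ.filter (fun g : G => ρ.ρ g = 1) := by
    ext g
    simp only [Finset.mem_filter, Finset.mem_univ, true_and]
    rw [FDRep.char_one, char_eq_dim_iff]
  rw [hfilt] at key
  set S := Finset.univ.filter (fun g : G => ρ.ρ g = 1) with hS
  have hkey2 : (∑ g ∈ S, Vi.character g * (starRingEnd ℂ) (Vj.character g))
      = c * ∑ g ∈ S, ((Complex.normSq (Vj.character g) : ℝ) : ℂ) := by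
    rw [Finset.mul_sum]
    refine Finset.sum_congr rfl fun g hg => ?_
    have hgS : ρ.ρ g = 1 := (Finset.mem_filter.mp hg).2
    rw [hc g hgS, ← Complex.mul_conj]
    ring
  have h1S : (1 : G) ∈ S := by
    rw [hS, Finset.mem_filter]
    exact ⟨Finset.mem_univ 1, map_one ρ.ρ⟩
  have hj0 : Vj.character 1 ≠ 0 := by
    rw [FDRep.char_one]
    exact_mod_cast finrank_ne_zero_of_simple Vj hsj
  have hpos : (0 : ℝ) < ∑ g ∈ S, Complex.normSq (Vj.character g) :=
    Finset.sum_pos' (fun g _ => Complex.normSq_nonneg _)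
      ⟨1, h1S, Complex.normSq_pos.mpr hj0⟩
  have hsne : (∑ g ∈ S, ((Complex.normSq (Vj.character g) : ℝ) : ℂ)) ≠ 0 := by
    rw [← Complex.ofReal_sum]
    exact_mod_cast hpos.ne'
  have hcne : c ≠ 0 := by
    intro h0
    have := hc 1 (map_one ρ.ρ)
    rw [h0, zero_mul, FDRep.char_one] at this
    exact (finrank_ne_zero_of_simple Vi hsi) (by exact_mod_cast this)
  rw [hkey2] at key
  exact (mul_ne_zero hcne hsne) key
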